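/- Let H be an N×N real symmetric tridiagonal matrix with N ≥ 2, let λ ∈ ℝ, and set M = λ I_N − H and f(λ) = det(M). Then the following identity holds: ( ∑_{k=1}^N det(M_{k|k}) )² − ∑_{k=1}^N det(M_{k|k})² − 2 ∑_{k=1}^{N−1} det(M_{k|k+1})² = 2 · f(λ) · ∑_{k=1}^{N−1} det(M_{k,k+1|k,k+1}) + 2 ∑_{1 ≤ k < ℓ ≤ N, ℓ−k > 1} det(M_{k|k}) · det(M_{ℓ|ℓ}). -/

import Mathlib

/-- The strictly monotone embedding `Fin n → Fin (n+2)` whose image omits the two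
indices `k` and `l`, provided `k < l`. -/
def skipTwo {n : ℕ} (k l : Fin (n + 2)) : Fin n → Fin (n + 2) :=
  fun r =>
    if r.1 < k.1 then ⟨r.1, Nat.lt_succ_of_lt (Nat.lt_succ_of_lt r.isLt)⟩
    else if r.1 + 1 < l.1 then ⟨r.1 + 1, Nat.succ_lt_succ (Nat.lt_succ_of_lt r.isLt)⟩
    else ⟨r.1 + 2, Nat.succ_lt_succ (Nat.succ_lt_succ r.isLt)⟩

open Matrix Finset

set_option linter.unusedVariables false

lemma aux_perm_pair {α : Type*} [DecidableEq α] (a b : α) (hab : a ≠ b)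
    (σ : Equiv.Perm α) (h : ∀ i, i ≠ a → i ≠ b → σ i = i) :
    σ = 1 ∨ σ = Equiv.swap a b := by
  have step : ∀ i, σ i = a ∨ σ i = b ∨ σ i = i := by
    intro i
    by_cases h1 : σ i = a
    · exact Or.inl h1
    by_cases h2 : σ i = b
    · exact Or.inr (Or.inl h2)
    · exact Or.inr (Or.inr (σ.injective (h (σ i) h1 h2)))
  have hone : σ a = a → σ = 1 := by
    intro h1
    have h2 : σ b = b := by
      rcases step b with h2 | h2 | h2
      · exact absurd (σ.injective (h2.trans h1.symm)) hab.symm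
      · exact h2
      · exact h2
    ext i
    by_cases hia : i = a
    · simp [hia, h1]
    by_cases hib : i = b
    · simp [hib, h2]
    · simp [h i hia hib]
  rcases step a with h1 | h1 | h1
  · exact Or.inl (hone h1)
  · right
    have h2 : σ b = a := by
      rcases step b with h2 | h2 | h2
      · exact h2
      · exact absurd (σ.injective (h2.trans h1.symm)) hab.symm
      · exact absurd (σ.injective (h2.trans h1.symm)) hab.symm
    ext i
    by_cases hia : i = a
    · simp [hia, h1, Equiv.swap_apply_left]
    by_cases hib : i = b
    · simp [hib, h2, Equiv.swap_apply_right]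
    · simp [h i hia hib, Equiv.swap_apply_of_ne_of_ne hia hib]
  · exact Or.inl (hone h1)

lemma aux_det_two_col {α : Type*} [DecidableEq α] [Fintype α] (a b : α) (hab : a ≠ b)
    (u v : α → ℝ) :
    (((1 : Matrix α α ℝ).updateCol a u).updateCol b v).det
      = u a * v b - u b * v a := by
  set P := ((1 : Matrix α α ℝ).updateCol a u).updateCol b v with hP
  have hPa : ∀ i, P i a = u i := by
    intro i
    rw [hP, Matrix.updateCol_ne hab, Matrix.updateCol_self]
  have hPb : ∀ i, P i b = v i := by
    intro i; rw [hP, Matrix.updateCol_self]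
  have hPo : ∀ i j, j ≠ a → j ≠ b → P i j = (if i = j then (1:ℝ) else 0) := by
    intro i j hja hjb
    rw [hP, Matrix.updateCol_ne hjb, Matrix.updateCol_ne hja, Matrix.one_apply]
  have hswap_ne : (1 : Equiv.Perm α) ≠ Equiv.swap a b := by
    intro h
    have : (1 : Equiv.Perm α) a = Equiv.swap a b a := by rw [h]
    simp [Equiv.swap_apply_left] at this
    exact hab this
  rw [Matrix.det_apply]
  rw [← Finset.sum_subset (Finset.subset_univ ({1, Equiv.swap a b} : Finset (Equiv.Perm α)))
      ?_]
  · rw [Finset.sum_pair hswap_ne]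
    have hprod1 : ∏ i, P i i = u a * v b := by
      rw [← Finset.prod_subset (Finset.subset_univ ({a, b} : Finset α)) ?_]
      · rw [Finset.prod_pair hab, hPa, hPb]
      · intro x _ hx
        simp only [Finset.mem_insert, Finset.mem_singleton, not_or] at hx
        rw [hPo x x hx.1 hx.2, if_pos rfl]
    have hprod2 : ∏ i, P (Equiv.swap a b i) i = u b * v a := by
      rw [← Finset.prod_subset (Finset.subset_univ ({a, b} : Finset α)) ?_]
      · rw [Finset.prod_pair hab, Equiv.swap_apply_left, Equiv.swap_apply_right, hPa, hPb]
      · intro x _ hx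
        simp only [Finset.mem_insert, Finset.mem_singleton, not_or] at hx
        rw [Equiv.swap_apply_of_ne_of_ne hx.1 hx.2, hPo x x hx.1 hx.2, if_pos rfl]
    simp only [Equiv.Perm.one_apply] at hprod1 ⊢
    rw [hprod1, hprod2]
    simp [Equiv.Perm.sign_swap hab, Units.smul_def, sub_eq_add_neg]
  · intro σ _ hσ
    simp only [Finset.mem_insert, Finset.mem_singleton, not_or] at hσ
    have : ¬ (∀ i, i ≠ a → i ≠ b → σ i = i) := by
      intro h
      rcases aux_perm_pair a b hab σ h with h | h
      · exact hσ.1 h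
      · exact hσ.2 h
    push_neg at this
    obtain ⟨i0, hia, hib, hne⟩ := this
    have hz : P (σ i0) i0 = 0 := by
      rw [hPo (σ i0) i0 hia hib, if_neg hne]
    have hz2 : (∏ i : α, P (σ i) i) = 0 := Finset.prod_eq_zero (Finset.mem_univ i0) hz
    rw [hz2, smul_zero]

/-- det of matrix with column c replaced by the standard basis vector e_c. -/
lemma aux_det_single_col {m : ℕ} (B : Matrix (Fin (m+1)) (Fin (m+1)) ℝ) (c : Fin (m+1)) :
    (B.updateCol c (Pi.single c 1)).det = (B.submatrix c.succAbove c.succAbove).det := by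
  rw [Matrix.det_succ_column _ c, Finset.sum_eq_single c ?_ ?_]
  · rw [Matrix.updateCol_self, Pi.single_eq_same, Matrix.submatrix_updateCol_succAbove]
    have he : (-1 : ℝ) ^ ((c:ℕ) + c) = 1 := Even.neg_one_pow ⟨c, rfl⟩
    rw [he, mul_one, one_mul]
  · intro i _ hi
    rw [Matrix.updateCol_self, Pi.single_eq_of_ne hi, mul_zero, zero_mul]
  · intro h; exact absurd (Finset.mem_univ c) h

lemma aux_skipTwo_eq_comp {n : ℕ} (k : Fin (n+1)) :
    skipTwo (k.castSucc) (k.succ) = (k.castSucc).succAbove ∘ k.succAbove := by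
  funext r
  simp only [skipTwo, Function.comp_apply, Fin.coe_castSucc, Fin.val_succ]
  by_cases h : (r:ℕ) < (k:ℕ)
  · rw [if_pos h]
    have h1 : k.succAbove r = r.castSucc :=
      Fin.succAbove_of_castSucc_lt _ _ (by simpa [Fin.lt_def] using h)
    have h2 : (k.castSucc).succAbove (r.castSucc) = (r.castSucc).castSucc :=
      Fin.succAbove_of_castSucc_lt _ _ (by simpa [Fin.lt_def] using h)
    rw [h1, h2]
    ext; simp
  · rw [if_neg h, if_neg (by omega : ¬ (r:ℕ) + 1 < (k:ℕ) + 1)]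
    have h1 : k.succAbove r = r.succ :=
      Fin.succAbove_of_le_castSucc _ _ (by simp [Fin.le_def]; omega)
    have h2 : (k.castSucc).succAbove (r.succ) = (r.succ).succ :=
      Fin.succAbove_of_le_castSucc _ _ (by simp [Fin.le_def]; omega)
    rw [h1, h2]
    ext; simp

lemma aux_updateColumn_comm {α β : Type*} [DecidableEq β] (A : Matrix α β ℝ) {a b : β}
    (hab : a ≠ b) (u v : α → ℝ) :
    (A.updateCol a u).updateCol b v = (A.updateCol b v).updateCol a u := by
  ext i j
  by_cases h1 : j = a
  · subst h1
    rw [Matrix.updateCol_ne hab, Matrix.updateCol_self, Matrix.updateCol_self]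
  by_cases h2 : j = b
  · subst h2
    rw [Matrix.updateCol_self, Matrix.updateCol_ne (Ne.symm hab), Matrix.updateCol_self]
  · rw [Matrix.updateCol_ne h2, Matrix.updateCol_ne h1, Matrix.updateCol_ne h1,
      Matrix.updateCol_ne h2]

lemma aux_submatrix_update {n : ℕ} (A : Matrix (Fin (n+2)) (Fin (n+2)) ℝ) (k : Fin (n+1)) :
    (A.updateCol k.succ (Pi.single k.succ 1)).submatrix
        (k.castSucc).succAbove (k.castSucc).succAbove
      = (A.submatrix (k.castSucc).succAbove (k.castSucc).succAbove).updateCol k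
          (Pi.single k 1) := by
  have haSk : (k.castSucc).succAbove k = k.succ :=
    Fin.succAbove_of_le_castSucc _ _ (le_refl _)
  have hinj : Function.Injective (k.castSucc).succAbove := Fin.succAbove_right_injective
  ext i j
  rw [Matrix.submatrix_apply, Matrix.updateCol_apply, Matrix.updateCol_apply]
  by_cases hj : j = k
  · rw [if_pos (show (k.castSucc).succAbove j = k.succ by rw [hj]; exact haSk), if_pos hj,
      Pi.single_apply, Pi.single_apply]
    by_cases hik : i = k
    · rw [if_pos (show (k.castSucc).succAbove i = k.succ by rw [hik]; exact haSk), if_pos hik]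
    · rw [if_neg (fun h => hik (hinj (h.trans haSk.symm))), if_neg hik]
  · rw [if_neg hj, if_neg (fun h => hj (hinj (h.trans haSk.symm))), Matrix.submatrix_apply]

lemma aux_detQ {n : ℕ} (A : Matrix (Fin (n+2)) (Fin (n+2)) ℝ) (k : Fin (n+1)) :
    ((A.updateCol (k.castSucc) (A.det • (Pi.single k.castSucc 1 : Fin (n+2) → ℝ))).updateCol
        (k.succ) (A.det • (Pi.single k.succ 1 : Fin (n+2) → ℝ))).det
      = A.det * (A.det *
          (A.submatrix (skipTwo k.castSucc k.succ) (skipTwo k.castSucc k.succ)).det) := by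
  have hab : k.castSucc ≠ k.succ := by
    simp [Fin.ext_iff]
  rw [Matrix.det_updateCol_smul]
  rw [aux_updateColumn_comm _ hab, Matrix.det_updateCol_smul]
  have h3 : ((A.updateCol k.succ (Pi.single k.succ 1)).updateCol k.castSucc
      (Pi.single k.castSucc 1)).det
      = (A.submatrix (skipTwo k.castSucc k.succ) (skipTwo k.castSucc k.succ)).det := by
    rw [aux_det_single_col, aux_submatrix_update, aux_det_single_col,
      Matrix.submatrix_submatrix, ← aux_skipTwo_eq_comp]
  rw [h3]

lemma aux_dj_inv {n : ℕ} (A : Matrix (Fin (n+2)) (Fin (n+2)) ℝ) (k : Fin (n+1))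
    (hdet : A.det ≠ 0) :
    A.det * (A.submatrix (skipTwo k.castSucc k.succ) (skipTwo k.castSucc k.succ)).det
      = (A.submatrix (k.castSucc).succAbove (k.castSucc).succAbove).det *
          (A.submatrix (k.succ).succAbove (k.succ).succAbove).det
        - (A.submatrix (k.castSucc).succAbove (k.succ).succAbove).det *
          (A.submatrix (k.succ).succAbove (k.castSucc).succAbove).det := by
  set a := k.castSucc with ha
  set b := k.succ with hb
  have hab : a ≠ b := by simp [ha, hb, Fin.ext_iff]
  set u : Fin (n+2) → ℝ := fun x => A.adjugate x a with hu
  set v : Fin (n+2) → ℝ := fun x => A.adjugate x b with hv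
  set P := (((1 : Matrix (Fin (n+2)) (Fin (n+2)) ℝ).updateCol a u).updateCol b v) with hPdef
  have hadj : ∀ i c : Fin (n+2), (∑ x, A i x * A.adjugate x c)
      = A.det * (if i = c then 1 else 0) := by
    intro i c
    have := congrFun (congrFun (Matrix.mul_adjugate A) i) c
    rw [Matrix.mul_apply] at this
    rw [this, Matrix.smul_apply, Matrix.one_apply, smul_eq_mul]
  have hAP : A * P = (A.updateCol a (A.det • (Pi.single a 1 : Fin (n+2) → ℝ))).updateCol b
      (A.det • (Pi.single b 1 : Fin (n+2) → ℝ)) := by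
    ext i j
    rw [Matrix.mul_apply]
    by_cases hjb : j = b
    · subst hjb
      have : ∀ x, P x b = v x := fun x => by rw [hPdef, Matrix.updateCol_self]
      simp_rw [this]
      rw [hadj i b, Matrix.updateCol_self, Pi.smul_apply, Pi.single_apply, smul_eq_mul]
    by_cases hja : j = a
    · subst hja
      have : ∀ x, P x a = u x := fun x => by
        rw [hPdef, Matrix.updateCol_ne hab, Matrix.updateCol_self]
      simp_rw [this]
      rw [hadj i a, Matrix.updateCol_ne hjb, Matrix.updateCol_self, Pi.smul_apply,
        Pi.single_apply, smul_eq_mul]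
    · have : ∀ x, P x j = (1 : Matrix (Fin (n+2)) (Fin (n+2)) ℝ) x j := fun x => by
        rw [hPdef, Matrix.updateCol_ne hjb, Matrix.updateCol_ne hja]
      simp_rw [this]
      rw [Matrix.updateCol_ne hjb, Matrix.updateCol_ne hja]
      simp [Matrix.one_apply, mul_ite]
  have hdetP : A.det * P.det = A.det * (A.det *
      (A.submatrix (skipTwo a b) (skipTwo a b)).det) := by
    rw [← Matrix.det_mul, hAP, aux_detQ]
  have hP2 : P.det = A.det * (A.submatrix (skipTwo a b) (skipTwo a b)).det :=
    mul_left_cancel₀ hdet hdetP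
  have hPval : P.det = u a * v b - u b * v a := aux_det_two_col a b hab u v
  have hua : u a = (A.submatrix a.succAbove a.succAbove).det := by
    show A.adjugate a a = _
    rw [Matrix.adjugate_fin_succ_eq_det_submatrix]
    rw [Even.neg_one_pow ⟨(a : ℕ), rfl⟩, one_mul]
  have hvb : v b = (A.submatrix b.succAbove b.succAbove).det := by
    show A.adjugate b b = _
    rw [Matrix.adjugate_fin_succ_eq_det_submatrix,
      Even.neg_one_pow ⟨(b : ℕ), rfl⟩, one_mul]
  have hub : u b = -(A.submatrix a.succAbove b.succAbove).det := by
    show A.adjugate b a = _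
    rw [Matrix.adjugate_fin_succ_eq_det_submatrix]
    have : ((a : ℕ) + (b : ℕ)) = 2 * (k : ℕ) + 1 := by
      simp [ha, hb]; omega
    rw [this, Odd.neg_one_pow ⟨(k : ℕ), rfl⟩, neg_one_mul]
  have hva : v a = -(A.submatrix b.succAbove a.succAbove).det := by
    show A.adjugate a b = _
    rw [Matrix.adjugate_fin_succ_eq_det_submatrix]
    have : ((b : ℕ) + (a : ℕ)) = 2 * (k : ℕ) + 1 := by
      simp [ha, hb]; omega
    rw [this, Odd.neg_one_pow ⟨(k : ℕ), rfl⟩, neg_one_mul]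
  rw [← hP2, hPval, hua, hvb, hub, hva]
  ring

open Polynomial in
lemma aux_dj {n : ℕ} (A : Matrix (Fin (n+2)) (Fin (n+2)) ℝ) (k : Fin (n+1)) :
    A.det * (A.submatrix (skipTwo k.castSucc k.succ) (skipTwo k.castSucc k.succ)).det
      = (A.submatrix (k.castSucc).succAbove (k.castSucc).succAbove).det *
          (A.submatrix (k.succ).succAbove (k.succ).succAbove).det
        - (A.submatrix (k.castSucc).succAbove (k.succ).succAbove).det *
          (A.submatrix (k.succ).succAbove (k.castSucc).succAbove).det := by
  set B : Matrix (Fin (n+2)) (Fin (n+2)) ℝ[X] :=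
    (Matrix.charmatrix (-A)) with hB
  -- p and q
  set p : ℝ[X] := B.det *
    (B.submatrix (skipTwo k.castSucc k.succ) (skipTwo k.castSucc k.succ)).det with hp
  set q : ℝ[X] := (B.submatrix (k.castSucc).succAbove (k.castSucc).succAbove).det *
          (B.submatrix (k.succ).succAbove (k.succ).succAbove).det
        - (B.submatrix (k.castSucc).succAbove (k.succ).succAbove).det *
          (B.submatrix (k.succ).succAbove (k.castSucc).succAbove).det with hq
  have hmapdet : ∀ (ε : ℝ) {m : ℕ} (u v : Fin m → Fin (n+2)),
      Polynomial.eval ε (B.submatrix u v).det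
        = ((B.map (Polynomial.evalRingHom ε)).submatrix u v).det := by
    intro ε m u v
    rw [Matrix.submatrix_map]
    have := RingHom.map_det (Polynomial.evalRingHom ε) (B.submatrix u v)
    simpa using this
  have hBdet : ∀ (ε : ℝ), Polynomial.eval ε B.det = (B.map (Polynomial.evalRingHom ε)).det := by
    intro ε
    have := RingHom.map_det (Polynomial.evalRingHom ε) B
    simpa using this
  have hBne : B.det ≠ 0 := by
    have : B.det = Matrix.charpoly (-A) := rfl
    rw [this]
    exact (Matrix.charpoly_monic _).ne_zero
  have hfin : {ε : ℝ | Polynomial.IsRoot B.det ε}.Finite :=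
    Polynomial.finite_setOf_isRoot hBne
  have hsub : {ε : ℝ | Polynomial.IsRoot B.det ε}ᶜ ⊆ {ε : ℝ | eval ε p = eval ε q} := by
    intro ε hε
    simp only [Set.mem_compl_iff, Set.mem_setOf_eq, Polynomial.IsRoot] at hε
    set Aε := B.map (Polynomial.evalRingHom ε) with hAε
    have hdet : Aε.det ≠ 0 := by rw [← hBdet]; exact hε
    have hdj := aux_dj_inv Aε k hdet
    show Polynomial.eval ε p = Polynomial.eval ε q
    rw [hp, hq]
    simp only [Polynomial.eval_mul, Polynomial.eval_sub]
    rw [hBdet ε, hmapdet ε, hmapdet ε, hmapdet ε, hmapdet ε, hmapdet ε]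
    exact hdj
  have hinf : {ε : ℝ | eval ε p = eval ε q}.Infinite :=
    (hfin.infinite_compl).mono hsub
  have hpq : p = q := Polynomial.eq_of_infinite_eval_eq p q hinf
  have hA0 : B.map (Polynomial.evalRingHom 0) = A := by
    ext i j
    by_cases hij : i = j
    · subst hij
      simp [hB, Matrix.charmatrix_apply, Matrix.map_apply, Matrix.diagonal_apply]
    · simp [hB, Matrix.charmatrix_apply, Matrix.map_apply, Matrix.diagonal_apply, hij]
  have h0 : Polynomial.eval 0 p = Polynomial.eval 0 q := by rw [hpq]
  rw [hp, hq] at h0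
  simp only [Polynomial.eval_mul, Polynomial.eval_sub] at h0
  rw [hBdet 0, hmapdet 0, hmapdet 0, hmapdet 0, hmapdet 0, hmapdet 0, hA0] at h0
  exact h0

set_option maxHeartbeats 2000000 in
/-- Let `H` be an `N×N` real symmetric tridiagonal matrix (`N ≥ 2`),
`λ ∈ ℝ`, `M = λ I − H`, and `f(λ) = det M`.  Then
`(∑_k det M_{k|k})² − ∑_k det(M_{k|k})² − 2 ∑_{k=1}^{N−1} det(M_{k|k+1})²`
`= 2 f(λ) ∑_{k=1}^{N−1} det(M_{k,k+1|k,k+1}) + 2 ∑_{ℓ−k>1} det(M_{k|k}) det(M_{ℓ|ℓ})`. -/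
theorem tridiagonal_minor_det_identity {n : ℕ}
    (H : Matrix (Fin (n + 2)) (Fin (n + 2)) ℝ)
    (hsymm : H.IsSymm)
    (htri : ∀ i j : Fin (n + 2), (i : ℕ) + 1 < (j : ℕ) → H i j = 0)
    (lam : ℝ)
    (M : Matrix (Fin (n + 2)) (Fin (n + 2)) ℝ)
    (hM : M = lam • (1 : Matrix (Fin (n + 2)) (Fin (n + 2)) ℝ) - H) :
    (∑ k : Fin (n + 2), (M.submatrix k.succAbove k.succAbove).det) ^ 2
      - ∑ k : Fin (n + 2), (M.submatrix k.succAbove k.succAbove).det ^ 2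
      - 2 * ∑ k : Fin (n + 1), (M.submatrix (k.castSucc).succAbove (k.succ).succAbove).det ^ 2
    = 2 * M.det *
        ∑ k : Fin (n + 1),
          (M.submatrix (skipTwo k.castSucc k.succ) (skipTwo k.castSucc k.succ)).det
      + 2 * ∑ p ∈ Finset.univ.filter
            (fun p : Fin (n + 2) × Fin (n + 2) => (p.1 : ℕ) + 1 < (p.2 : ℕ)),
          (M.submatrix p.1.succAbove p.1.succAbove).det
            * (M.submatrix p.2.succAbove p.2.succAbove).det := by
  classical
  have hsymM : Mᵀ = M := by
    rw [hM, Matrix.transpose_sub, Matrix.transpose_smul, Matrix.transpose_one, hsymm.eq]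
  have hoff : ∀ k : Fin (n+1),
      (M.submatrix (k.succ).succAbove (k.castSucc).succAbove).det
        = (M.submatrix (k.castSucc).succAbove (k.succ).succAbove).det := by
    intro k
    have h1 : (M.submatrix (k.castSucc).succAbove (k.succ).succAbove)ᵀ
        = M.submatrix (k.succ).succAbove (k.castSucc).succAbove := by
      rw [Matrix.transpose_submatrix, hsymM]
    rw [← h1, Matrix.det_transpose]
  have hkey : ∀ k : Fin (n+1),
      (M.submatrix (k.castSucc).succAbove (k.castSucc).succAbove).det
          * (M.submatrix (k.succ).succAbove (k.succ).succAbove).det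
        - (M.submatrix (k.castSucc).succAbove (k.succ).succAbove).det ^ 2
      = M.det * (M.submatrix (skipTwo k.castSucc k.succ) (skipTwo k.castSucc k.succ)).det := by
    intro k
    have h := aux_dj M k
    rw [hoff k] at h
    rw [pow_two, ← h]
  set dd : Fin (n+2) → ℝ := fun i => (M.submatrix i.succAbove i.succAbove).det with hdd
  -- the big square expansion
  have hsq : (∑ i : Fin (n+2), dd i) ^ 2
      = ∑ p : Fin (n+2) × Fin (n+2), dd p.1 * dd p.2 := by
    rw [pow_two, Finset.sum_mul_sum]
    rw [Fintype.sum_prod_type]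
  -- mirror
  have hmirror : ∑ p ∈ Finset.univ.filter
        (fun p : Fin (n+2) × Fin (n+2) => (p.2 : ℕ) < (p.1 : ℕ)), dd p.1 * dd p.2
      = ∑ p ∈ Finset.univ.filter
        (fun p : Fin (n+2) × Fin (n+2) => (p.1 : ℕ) < (p.2 : ℕ)), dd p.1 * dd p.2 := by
    refine Finset.sum_nbij' Prod.swap Prod.swap ?_ ?_ ?_ ?_ ?_
    · intro p hp; simp only [Finset.mem_filter, Finset.mem_univ, true_and] at hp ⊢
      exact hp
    · intro p hp; simp only [Finset.mem_filter, Finset.mem_univ, true_and] at hp ⊢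
      exact hp
    · intro p _; exact Prod.swap_swap p
    · intro p _; exact Prod.swap_swap p
    · intro p _; exact mul_comm _ _
  -- diagonal
  have hdiag : ∑ p ∈ Finset.univ.filter
        (fun p : Fin (n+2) × Fin (n+2) => p.1 = p.2), dd p.1 * dd p.2
      = ∑ i : Fin (n+2), dd i ^ 2 := by
    refine Finset.sum_nbij' Prod.fst (fun i => (i, i)) ?_ ?_ ?_ ?_ ?_
    · intro p _; exact Finset.mem_univ _
    · intro i _; simp
    · intro p hp
      simp only [Finset.mem_filter, Finset.mem_univ, true_and] at hp
      exact Prod.ext rfl hp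
    · intro i _; rfl
    · intro p hp
      simp only [Finset.mem_filter, Finset.mem_univ, true_and] at hp
      rw [← hp, pow_two]
  -- adjacent
  have hadjsum : ∑ p ∈ Finset.univ.filter
        (fun p : Fin (n+2) × Fin (n+2) => (p.2 : ℕ) = (p.1 : ℕ) + 1), dd p.1 * dd p.2
      = ∑ k : Fin (n+1), dd k.castSucc * dd k.succ := by
    refine Finset.sum_nbij'
      (fun p => (⟨min (p.1 : ℕ) n, Nat.lt_succ_of_le (Nat.min_le_right _ _)⟩ : Fin (n+1)))
      (fun k => (k.castSucc, k.succ)) ?_ ?_ ?_ ?_ ?_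
    · intro p _; exact Finset.mem_univ _
    · intro k _
      simp only [Finset.mem_filter, Finset.mem_univ, true_and, Fin.val_succ,
        Fin.coe_castSucc]
    · intro p hp
      simp only [Finset.mem_filter, Finset.mem_univ, true_and] at hp
      have h1 : (p.1 : ℕ) ≤ n := by
        have := p.2.isLt; omega
      refine Prod.ext ?_ ?_
      · ext; simp [Fin.coe_castSucc]; omega
      · ext; simp [Fin.val_succ]; omega
    · intro k _
      ext
      simp only [Fin.coe_castSucc]
      omega
    · intro p hp
      simp only [Finset.mem_filter, Finset.mem_univ, true_and] at hp
      have h1 : (p.1 : ℕ) ≤ n := by have := p.2.isLt; omega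
      have e1 : (⟨min (p.1 : ℕ) n, Nat.lt_succ_of_le (Nat.min_le_right _ _)⟩ : Fin (n+1)).castSucc
          = p.1 := by ext; simp; omega
      have e2 : (⟨min (p.1 : ℕ) n, Nat.lt_succ_of_le (Nat.min_le_right _ _)⟩ : Fin (n+1)).succ
          = p.2 := by ext; simp; omega
      rw [e1, e2]
  -- splitting
  have split1 : ∑ p : Fin (n+2) × Fin (n+2), dd p.1 * dd p.2
      = (∑ p ∈ Finset.univ.filter
          (fun p : Fin (n+2) × Fin (n+2) => (p.1 : ℕ) < (p.2 : ℕ)), dd p.1 * dd p.2)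
        + (∑ p ∈ Finset.univ.filter
          (fun p : Fin (n+2) × Fin (n+2) => ¬ (p.1 : ℕ) < (p.2 : ℕ)), dd p.1 * dd p.2) :=
    (Finset.sum_filter_add_sum_filter_not _ _ _).symm
  have split2 : ∑ p ∈ Finset.univ.filter
        (fun p : Fin (n+2) × Fin (n+2) => ¬ (p.1 : ℕ) < (p.2 : ℕ)), dd p.1 * dd p.2
      = (∑ p ∈ Finset.univ.filter
          (fun p : Fin (n+2) × Fin (n+2) => (p.2 : ℕ) < (p.1 : ℕ)), dd p.1 * dd p.2)
        + (∑ p ∈ Finset.univ.filter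
          (fun p : Fin (n+2) × Fin (n+2) => p.1 = p.2), dd p.1 * dd p.2) := by
    rw [← Finset.sum_filter_add_sum_filter_not
      (Finset.univ.filter (fun p : Fin (n+2) × Fin (n+2) => ¬ (p.1 : ℕ) < (p.2 : ℕ)))
      (fun p => (p.2 : ℕ) < (p.1 : ℕ))]
    congr 1
    · congr 1
      rw [Finset.filter_filter]
      apply Finset.filter_congr
      intro p _
      constructor
      · exact fun h => h.2
      · exact fun h => ⟨by omega, h⟩
    · congr 1
      rw [Finset.filter_filter]
      apply Finset.filter_congr
      intro p _
      constructor
      · intro h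
        exact Fin.ext (by omega)
      · intro h
        rw [h]
        omega
  have split3 : ∑ p ∈ Finset.univ.filter
        (fun p : Fin (n+2) × Fin (n+2) => (p.1 : ℕ) < (p.2 : ℕ)), dd p.1 * dd p.2
      = (∑ p ∈ Finset.univ.filter
          (fun p : Fin (n+2) × Fin (n+2) => (p.1 : ℕ) + 1 < (p.2 : ℕ)), dd p.1 * dd p.2)
        + (∑ p ∈ Finset.univ.filter
          (fun p : Fin (n+2) × Fin (n+2) => (p.2 : ℕ) = (p.1 : ℕ) + 1), dd p.1 * dd p.2) := by
    rw [← Finset.sum_filter_add_sum_filter_not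
      (Finset.univ.filter (fun p : Fin (n+2) × Fin (n+2) => (p.1 : ℕ) < (p.2 : ℕ)))
      (fun p => (p.1 : ℕ) + 1 < (p.2 : ℕ))]
    congr 1
    · congr 1
      rw [Finset.filter_filter]
      apply Finset.filter_congr
      intro p _
      constructor
      · exact fun h => h.2
      · exact fun h => ⟨by omega, h⟩
    · congr 1
      rw [Finset.filter_filter]
      apply Finset.filter_congr
      intro p _
      constructor
      · intro h; omega
      · intro h; omega
  have H1 : (∑ i : Fin (n+2), dd i) ^ 2
      = (∑ i : Fin (n+2), dd i ^ 2)
        + 2 * (∑ k : Fin (n+1), dd k.castSucc * dd k.succ)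
        + 2 * (∑ p ∈ Finset.univ.filter
            (fun p : Fin (n+2) × Fin (n+2) => (p.1 : ℕ) + 1 < (p.2 : ℕ)), dd p.1 * dd p.2) := by
    rw [hsq, split1, split2, split3, hmirror, split3, hdiag, hadjsum]
    ring
  have H2 : (∑ k : Fin (n+1), dd k.castSucc * dd k.succ)
      - (∑ k : Fin (n+1),
          (M.submatrix (k.castSucc).succAbove (k.succ).succAbove).det ^ 2)
      = M.det * ∑ k : Fin (n+1),
          (M.submatrix (skipTwo k.castSucc k.succ) (skipTwo k.castSucc k.succ)).det := by
    rw [← Finset.sum_sub_distrib, Finset.mul_sum]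
    exact Finset.sum_congr rfl fun k _ => hkey k
  have H2' : 2 * M.det * (∑ k : Fin (n+1),
        (M.submatrix (skipTwo k.castSucc k.succ) (skipTwo k.castSucc k.succ)).det)
      = 2 * (∑ k : Fin (n+1), dd k.castSucc * dd k.succ)
        - 2 * (∑ k : Fin (n+1),
            (M.submatrix (k.castSucc).succAbove (k.succ).succAbove).det ^ 2) := by
    rw [mul_assoc, ← H2]; ring
  have hgoal := H1
  linarith [H1, H2']
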